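/- Let g ≥ 2 and let G be the group presented by generators a₁, b₁, …, a_g, b_g subject to the single relation [a₁,b₁]⋯[a_g,b_g] = 1, where [a,b] = a b a⁻¹ b⁻¹. Write a₁, a₂ for the images in G of the first two generators of the first family. Then for every integer k ≥ 2 and all natural numbers ℓ, j, the elements a₁ · a₂^(−ℓ) · a₁^(k−1) · a₂^ℓ and a₁ · a₂^(−j) · a₁^(k−1) · a₂^j are conjugate in G if and only if ℓ = j. -/

import Mathlib

open scoped commutatorElement

open SemidirectProduct Finsupp

/-- The single relator `[a₁,b₁]⋯[a_g,b_g]` of the fundamental group of the orientable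
surface of genus `g`, as an element of the free group on `Fin g ⊕ Fin g`,
where `Sum.inl i` gives `aᵢ` and `Sum.inr i` gives `bᵢ`. -/
def surfaceRelator (g : ℕ) : FreeGroup (Fin g ⊕ Fin g) :=
  (List.ofFn fun i : Fin g =>
    ⁅(FreeGroup.of (Sum.inl i) : FreeGroup (Fin g ⊕ Fin g)), FreeGroup.of (Sum.inr i)⁆).prod

abbrev SBase := Multiplicative (ℤ →₀ ℤ)

noncomputable def shiftHom : Multiplicative ℤ →* MulAut SBase where
  toFun m := AddEquiv.toMultiplicative (Finsupp.domCongr (Equiv.addRight (m.toAdd)))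
  map_one' := by
    ext f : 1
    refine congrArg Multiplicative.ofAdd (Finsupp.ext fun x => ?_)
    show (Finsupp.equivMapDomain _ f.toAdd) x = f.toAdd x
    rw [Finsupp.equivMapDomain_apply]
    norm_num
    rfl
  map_mul' m n := by
    ext f : 1
    refine congrArg Multiplicative.ofAdd (Finsupp.ext fun x => ?_)
    show (Finsupp.equivMapDomain _ f.toAdd) x = (Finsupp.equivMapDomain _ (Finsupp.equivMapDomain _ f.toAdd)) x
    rw [Finsupp.equivMapDomain_apply, Finsupp.equivMapDomain_apply, Finsupp.equivMapDomain_apply]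
    show f.toAdd (x - (m.toAdd + n.toAdd)) = f.toAdd (x - m.toAdd - n.toAdd)
    ring_nf

abbrev SW := SBase ⋊[shiftHom] Multiplicative ℤ

lemma shiftHom_apply (m : ℤ) (v : ℤ →₀ ℤ) :
    shiftHom (Multiplicative.ofAdd m) (Multiplicative.ofAdd v)
      = Multiplicative.ofAdd (Finsupp.equivMapDomain (Equiv.addRight m) v) := rfl

variable (g : ℕ)

noncomputable def sGen : Fin g ⊕ Fin g → SW
  | Sum.inl i => if i.val = 0 then SemidirectProduct.inl (Multiplicative.ofAdd (Finsupp.single 0 1))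
      else if i.val = 1 then SemidirectProduct.inr (Multiplicative.ofAdd 1) else 1
  | Sum.inr _ => 1

lemma sGen_relator : ∀ r ∈ ({surfaceRelator g} : Set (FreeGroup (Fin g ⊕ Fin g))),
    FreeGroup.lift (sGen g) r = 1 := by
  intro r hr
  simp only [Set.mem_singleton_iff] at hr
  subst hr
  rw [surfaceRelator, map_list_prod]
  have : ∀ i : Fin g, FreeGroup.lift (sGen g) ⁅(FreeGroup.of (Sum.inl i) : FreeGroup (Fin g ⊕ Fin g)), FreeGroup.of (Sum.inr i)⁆ = 1 := by
    intro i
    rw [commutatorElement_def]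
    simp [sGen]
  simp [Function.comp_def, this]

open Multiplicative SemidirectProduct

lemma sw_pow (m : ℤ) : (SemidirectProduct.inr (ofAdd (1:ℤ)) : SW) ^ m = SemidirectProduct.inr (ofAdd m) := by
  rw [← map_zpow]
  norm_num [← ofAdd_zsmul]

lemma sw_word (m : ℤ) (k : ℕ) :
    (SemidirectProduct.inl (ofAdd (Finsupp.single 0 1)) : SW) *
      (SemidirectProduct.inr (ofAdd (1:ℤ)) : SW) ^ (-m) *
      (SemidirectProduct.inl (ofAdd (Finsupp.single 0 1)) : SW) ^ (k-1) *
      (SemidirectProduct.inr (ofAdd (1:ℤ)) : SW) ^ m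
    = SemidirectProduct.inl (ofAdd (Finsupp.single 0 1 + Finsupp.single (-m) ((k-1 : ℕ) : ℤ))) := by
  rw [sw_pow, sw_pow, ← map_pow]
  have h1 : (ofAdd (Finsupp.single (0:ℤ) (1:ℤ))) ^ (k-1) = ofAdd (Finsupp.single 0 ((k-1:ℕ):ℤ)) := by
    rw [← ofAdd_nsmul, Finsupp.smul_single]
    norm_num
  rw [h1]
  have h2 : (SemidirectProduct.inr (ofAdd (-m)) : SW) * SemidirectProduct.inl (ofAdd (Finsupp.single 0 ((k-1:ℕ):ℤ))) * SemidirectProduct.inr (ofAdd m)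
      = SemidirectProduct.inl (shiftHom (ofAdd (-m)) (ofAdd (Finsupp.single 0 ((k-1:ℕ):ℤ)))) := by
    rw [SemidirectProduct.inl_aut]
    simp
  have h3 : shiftHom (ofAdd (-m)) (ofAdd (Finsupp.single 0 ((k-1:ℕ):ℤ)))
      = ofAdd (Finsupp.single (-m) ((k-1:ℕ):ℤ)) := by
    rw [shiftHom_apply, Finsupp.equivMapDomain_single]
    norm_num
  calc _ = (SemidirectProduct.inl (ofAdd (Finsupp.single 0 1)) : SW) *
        ((SemidirectProduct.inr (ofAdd (-m)) : SW) * SemidirectProduct.inl (ofAdd (Finsupp.single 0 ((k-1:ℕ):ℤ))) * SemidirectProduct.inr (ofAdd m)) := by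
        group
    _ = _ := by rw [h2, h3, ← map_mul, ← ofAdd_add]

lemma sw_conj (h : SW) (v w : ℤ →₀ ℤ)
    (he : h⁻¹ * SemidirectProduct.inl (ofAdd v) * h = SemidirectProduct.inl (ofAdd w)) :
    Finsupp.domCongr (M := ℤ) (Equiv.addRight (toAdd h.right⁻¹)) v = w := by
  have base : (SemidirectProduct.inl (h.left)⁻¹ : SW) * SemidirectProduct.inl (ofAdd v) *
      SemidirectProduct.inl h.left = (SemidirectProduct.inl (ofAdd v) : SW) := by
    rw [← map_mul, ← map_mul]
    congr 1
    rw [mul_comm (h.left⁻¹) (ofAdd v), mul_assoc, inv_mul_cancel, mul_one]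
  have key : h⁻¹ * SemidirectProduct.inl (ofAdd v) * h
      = SemidirectProduct.inl (shiftHom h.right⁻¹ (ofAdd v)) := by
    calc h⁻¹ * SemidirectProduct.inl (ofAdd v) * h
        = SemidirectProduct.inr h.right⁻¹ *
            (SemidirectProduct.inl (h.left)⁻¹ * SemidirectProduct.inl (ofAdd v) *
              SemidirectProduct.inl h.left) * SemidirectProduct.inr h.right := by
          conv_lhs => rw [← SemidirectProduct.inl_left_mul_inr_right h]
          rw [mul_inv_rev, ← map_inv, ← map_inv]
          simp only [mul_assoc]
      _ = SemidirectProduct.inr h.right⁻¹ * SemidirectProduct.inl (ofAdd v) *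
            SemidirectProduct.inr h.right := by rw [base]
      _ = SemidirectProduct.inl (shiftHom h.right⁻¹ (ofAdd v)) := by
          rw [SemidirectProduct.inl_aut, inv_inv]
  rw [key] at he
  have h2 := congrArg Multiplicative.toAdd (SemidirectProduct.inl_injective he)
  exact h2

noncomputable abbrev sPhi (g : ℕ) :
    PresentedGroup ({surfaceRelator g} : Set (FreeGroup (Fin g ⊕ Fin g))) →* SW :=
  PresentedGroup.toGroup (sGen_relator g)

set_option maxHeartbeats 1000000 in
/-- **Nonconjugacy in the surface group.**
In the fundamental group of the orientable surface of genus `g ≥ 2`, with `a₁, a₂`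
the images of the first two generators of the first family, for `k ≥ 2` and `ℓ, j ∈ ℕ`,
the elements `a₁ a₂^(−ℓ) a₁^(k−1) a₂^ℓ` and `a₁ a₂^(−j) a₁^(k−1) a₂^j` are conjugate
if and only if `ℓ = j`. -/
theorem surfaceGroup_conjugate_iff (g : ℕ) (hg : 2 ≤ g) (k : ℕ) (hk : 2 ≤ k) (ℓ j : ℕ) :
    (∃ h : PresentedGroup ({surfaceRelator g} : Set (FreeGroup (Fin g ⊕ Fin g))),
        h⁻¹ *
            (PresentedGroup.of (rels := ({surfaceRelator g} : Set (FreeGroup (Fin g ⊕ Fin g))))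
                (Sum.inl (⟨0, by omega⟩ : Fin g)) *
              PresentedGroup.of (rels := ({surfaceRelator g} : Set (FreeGroup (Fin g ⊕ Fin g))))
                (Sum.inl (⟨1, by omega⟩ : Fin g)) ^ (-(ℓ : ℤ)) *
              PresentedGroup.of (rels := ({surfaceRelator g} : Set (FreeGroup (Fin g ⊕ Fin g))))
                (Sum.inl (⟨0, by omega⟩ : Fin g)) ^ (k - 1) *
              PresentedGroup.of (rels := ({surfaceRelator g} : Set (FreeGroup (Fin g ⊕ Fin g))))
                (Sum.inl (⟨1, by omega⟩ : Fin g)) ^ (ℓ : ℤ)) * h =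
          PresentedGroup.of (rels := ({surfaceRelator g} : Set (FreeGroup (Fin g ⊕ Fin g))))
              (Sum.inl (⟨0, by omega⟩ : Fin g)) *
            PresentedGroup.of (rels := ({surfaceRelator g} : Set (FreeGroup (Fin g ⊕ Fin g))))
              (Sum.inl (⟨1, by omega⟩ : Fin g)) ^ (-(j : ℤ)) *
            PresentedGroup.of (rels := ({surfaceRelator g} : Set (FreeGroup (Fin g ⊕ Fin g))))
              (Sum.inl (⟨0, by omega⟩ : Fin g)) ^ (k - 1) *
            PresentedGroup.of (rels := ({surfaceRelator g} : Set (FreeGroup (Fin g ⊕ Fin g))))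
              (Sum.inl (⟨1, by omega⟩ : Fin g)) ^ (j : ℤ)) ↔
      ℓ = j := by
  constructor
  · rintro ⟨h, hh⟩
    have hmap := congrArg (sPhi g) hh
    simp only [map_mul, map_inv, map_zpow, map_pow] at hmap
    have hA : sGen g (Sum.inl (⟨0, by omega⟩ : Fin g))
        = SemidirectProduct.inl (ofAdd (Finsupp.single 0 1)) := by simp [sGen]
    have hT : sGen g (Sum.inl (⟨1, by omega⟩ : Fin g))
        = SemidirectProduct.inr (ofAdd 1) := by simp [sGen]
    have hof : ∀ x, sPhi g (PresentedGroup.of x) = sGen g x := fun x =>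
      PresentedGroup.toGroup.of (sGen_relator g)
    simp only [hof] at hmap
    rw [hA, hT] at hmap
    rw [sw_word, sw_word] at hmap
    have E := sw_conj _ _ _ hmap
    rw [map_add] at E
    simp only [Finsupp.domCongr_apply, Finsupp.equivMapDomain_single, Equiv.coe_addRight,
      zero_add] at E
    have hc : ((k - 1 : ℕ) : ℤ) ≠ 0 := by omega
    rw [Finsupp.single_add_single_eq_single_add_single one_ne_zero hc] at E
    omega
  · rintro rfl
    exact ⟨1, by rw [inv_one, one_mul, mul_one]⟩
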